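/- For positive definite matrices A, B and t ∈ [0,1], the t-spectral mean satisfies the symmetry A ♮_t B = B ♮_{1-t} A. -/

import Mathlib

open Matrix
open scoped ComplexOrder

noncomputable def mpow {m : Type*} [Fintype m] [DecidableEq m]
    (A : Matrix m m ℂ) (t : ℝ) : Matrix m m ℂ :=
  if h : A.IsHermitian then
    (h.eigenvectorUnitary : Matrix m m ℂ) *
      Matrix.diagonal (fun i => ((h.eigenvalues i ^ t : ℝ) : ℂ)) *
      star (h.eigenvectorUnitary : Matrix m m ℂ)
  else A

/-- t-metric geometric mean `A ♯ₜ B`. -/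
noncomputable def msharp {m : Type*} [Fintype m] [DecidableEq m]
    (A B : Matrix m m ℂ) (t : ℝ) : Matrix m m ℂ :=
  mpow A (1/2) * mpow (mpow A (-(1/2)) * B * mpow A (-(1/2))) t * mpow A (1/2)

/-- t-spectral geometric mean `A ♮ₜ B`. -/
noncomputable def mnat {m : Type*} [Fintype m] [DecidableEq m]
    (A B : Matrix m m ℂ) (t : ℝ) : Matrix m m ℂ :=
  mpow (msharp A⁻¹ B (1/2)) t * A * mpow (msharp A⁻¹ B (1/2)) t

/-- Eigenvalues in non-increasing order (junk value `0` if not Hermitian). -/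
noncomputable def eigsDesc {n : ℕ} (A : Matrix (Fin n) (Fin n) ℂ) : Fin n → ℝ :=
  if h : A.IsHermitian then (fun i => h.eigenvalues (Tuple.sort h.eigenvalues i.rev)) else 0

/-- `x` is log-majorized by `y` (both listed in non-increasing order). -/
def LogMaj {n : ℕ} (x y : Fin n → ℝ) : Prop :=
  (∀ k : ℕ, ∏ i ∈ Finset.univ.filter (fun i : Fin n => (i : ℕ) < k), x i ≤
      ∏ i ∈ Finset.univ.filter (fun i : Fin n => (i : ℕ) < k), y i) ∧
    ∏ i, x i = ∏ i, y i

/-- k-th compound matrix. -/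
noncomputable def compound {n : ℕ} (k : ℕ) (A : Matrix (Fin n) (Fin n) ℂ) :
    Matrix {s : Finset (Fin n) // s.card = k} {s : Finset (Fin n) // s.card = k} ℂ :=
  fun s t => (A.submatrix (fun i => (s.1.orderIsoOfFin s.2 i : Fin n))
    (fun i => (t.1.orderIsoOfFin t.2 i : Fin n))).det



variable {m : Type*} [Fintype m] [DecidableEq m]


lemma contOn (f : ℝ → ℝ) (A : Matrix m m ℂ) : ContinuousOn f (spectrum ℝ A) :=
  (Matrix.finite_real_spectrum (A := A)).continuousOn f

lemma contOn' (f : ℝ → ℝ) (A : Matrix m m ℂ) (g : ℝ → ℝ) :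
    ContinuousOn f (g '' spectrum ℝ A) :=
  ((Matrix.finite_real_spectrum (A := A)).image g).continuousOn f

lemma mpow_eq_cfc {A : Matrix m m ℂ} (hA : A.IsHermitian) (t : ℝ) :
    mpow A t = cfc (fun x : ℝ => x ^ t) A := by
  rw [hA.cfc_eq, Matrix.IsHermitian.cfc, mpow, dif_pos hA]
  rfl

lemma spec_pos {A : Matrix m m ℂ} (hA : A.PosDef) : ∀ x ∈ spectrum ℝ A, 0 < x := by
  rw [hA.1.spectrum_real_eq_range_eigenvalues]
  rintro x ⟨i, rfl⟩
  exact hA.eigenvalues_pos i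

lemma mpow_mul_mpow {A : Matrix m m ℂ} (hA : A.PosDef) (s t : ℝ) :
    mpow A s * mpow A t = mpow A (s + t) := by
  rw [mpow_eq_cfc hA.1, mpow_eq_cfc hA.1, mpow_eq_cfc hA.1,
    ← cfc_mul _ _ A (contOn _ A) (contOn _ A)]
  exact cfc_congr fun x hx => (Real.rpow_add (spec_pos hA x hx) s t).symm

lemma mpow_one {A : Matrix m m ℂ} (hA : A.IsHermitian) : mpow A 1 = A := by
  rw [mpow_eq_cfc hA]
  simp only [Real.rpow_one]
  exact cfc_id' ℝ A hA

lemma mpow_zero {A : Matrix m m ℂ} (hA : A.IsHermitian) : mpow A 0 = 1 := by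
  rw [mpow_eq_cfc hA]
  simp only [Real.rpow_zero]
  exact cfc_one ℝ A hA

lemma mpow_isHermitian {A : Matrix m m ℂ} (hA : A.IsHermitian) (t : ℝ) :
    (mpow A t).IsHermitian := by
  rw [mpow_eq_cfc hA]
  exact IsSelfAdjoint.cfc

lemma posDef_conj {Q B : Matrix m m ℂ} (hB : B.PosDef) (hQ : IsUnit Q) :
    (Q * B * Qᴴ).PosDef := by
  refine Matrix.PosDef.of_dotProduct_mulVec_pos ?_ (fun x hx => ?_)
  · have := Matrix.isHermitian_conjTranspose_mul_mul Qᴴ hB.1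
    simpa using this
  · have hne : Qᴴ *ᵥ x ≠ 0 := by
      intro h
      have hinj : Function.Injective (Qᴴ.mulVec) :=
        Matrix.mulVec_injective_iff_isUnit.2 (by simpa using hQ.star)
      exact hx (hinj (by simpa using h))
    simpa only [star_mulVec, dotProduct_mulVec, vecMul_vecMul, conjTranspose_conjTranspose]
      using hB.dotProduct_mulVec_pos hne

lemma mpow_posDef {A : Matrix m m ℂ} (hA : A.PosDef) (t : ℝ) :
    (mpow A t).PosDef := by
  rw [mpow, dif_pos hA.1]
  have hd : (Matrix.diagonal (fun i => ((hA.1.eigenvalues i ^ t : ℝ) : ℂ))).PosDef := by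
    rw [Matrix.posDef_diagonal_iff]
    intro i
    have : (0:ℝ) < hA.1.eigenvalues i ^ t := Real.rpow_pos_of_pos (hA.eigenvalues_pos i) t
    exact_mod_cast this
  have hU : IsUnit (hA.1.eigenvectorUnitary : Matrix m m ℂ) :=
    (Unitary.toUnits hA.1.eigenvectorUnitary).isUnit
  simpa [star_eq_conjTranspose] using posDef_conj hd hU

lemma mpow_inv {A : Matrix m m ℂ} (hA : A.PosDef) (t : ℝ) :
    mpow A⁻¹ t = mpow A (-t) := by
  have hsa : IsSelfAdjoint A := hA.1
  have h1 : A⁻¹ = cfc (fun x : ℝ => x⁻¹) A := by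
    refine (Matrix.inv_eq_left_inv ?_)
    have := (cfc_mul (fun x : ℝ => x⁻¹) (fun x : ℝ => x) A (contOn _ A) (contOn _ A)).symm
    calc cfc (fun x : ℝ => x⁻¹) A * A
        = cfc (fun x : ℝ => x⁻¹) A * cfc (fun x : ℝ => x) A := by rw [cfc_id' ℝ A hsa]
      _ = cfc (fun x : ℝ => x⁻¹ * x) A := this
      _ = cfc (1 : ℝ → ℝ) A := cfc_congr fun x hx => by
            simp [inv_mul_cancel₀ (spec_pos hA x hx).ne']
      _ = 1 := cfc_one ℝ A hsa
  rw [mpow_eq_cfc (hA.inv).1, h1, ← cfc_comp' (fun x : ℝ => x ^ t) (fun x : ℝ => x⁻¹) A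
    (contOn' _ A _) (contOn _ A) hsa, mpow_eq_cfc hA.1]
  exact cfc_congr fun x hx => by
    rw [Real.inv_rpow (spec_pos hA x hx).le, ← Real.rpow_neg (spec_pos hA x hx).le]

lemma mpow_sq_half {W : Matrix m m ℂ} (hW : W.PosDef) : mpow (W * W) (1/2) = W := by
  have hsa : IsSelfAdjoint W := hW.1
  have h2 : W * W = cfc (fun x : ℝ => x * x) W := by
    rw [cfc_mul _ _ W (contOn _ W) (contOn _ W), cfc_id' ℝ W hsa]
  rw [h2, mpow_eq_cfc (show (cfc (fun x : ℝ => x * x) W).IsHermitian from IsSelfAdjoint.cfc),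
    ← cfc_comp' (fun x : ℝ => x ^ (1/2 : ℝ)) (fun x : ℝ => x * x) W
      (contOn' _ W _) (contOn _ W) hsa]
  calc cfc (fun x : ℝ => (x * x) ^ (1/2 : ℝ)) W
      = cfc (fun x : ℝ => x) W := cfc_congr fun x hx => by
        have hx0 := spec_pos hW x hx
        have hxx : x * x = x ^ (2:ℝ) := by rw [Real.rpow_two]; ring
        rw [hxx, ← Real.rpow_mul hx0.le]
        norm_num
    _ = W := cfc_id' ℝ W hsa

lemma msharp_spec {A B : Matrix m m ℂ} (hA : A.PosDef) (hB : B.PosDef) :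
    (msharp A⁻¹ B (1/2)).PosDef ∧ msharp A⁻¹ B (1/2) * A * msharp A⁻¹ B (1/2) = B := by
  have hAi := hA.inv
  set P := mpow A⁻¹ (1/2) with hP
  set Q := mpow A⁻¹ (-(1/2)) with hQ
  have hPpd : P.PosDef := mpow_posDef hAi _
  have hQpd : Q.PosDef := mpow_posDef hAi _
  have hPQ : P * Q = 1 := by
    rw [hP, hQ, mpow_mul_mpow hAi, show ((1:ℝ)/2 + -(1/2)) = 0 by norm_num, mpow_zero hAi.1]
  have hQP : Q * P = 1 := by
    rw [hP, hQ, mpow_mul_mpow hAi, show (-((1:ℝ)/2) + 1/2) = 0 by norm_num, mpow_zero hAi.1]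
  have hQQ : Q * Q = A := by
    rw [hQ, mpow_mul_mpow hAi, show (-((1:ℝ)/2) + -(1/2)) = -1 by norm_num, mpow_inv hA,
      neg_neg, mpow_one hA.1]
  set C := Q * B * Q with hC
  have hCpd : C.PosDef := by
    have := posDef_conj hB hQpd.isUnit
    rwa [hQpd.1] at this
  set S := mpow C (1/2) with hS
  have hSpd : S.PosDef := mpow_posDef hCpd _
  have hSS : S * S = C := by
    rw [hS, mpow_mul_mpow hCpd, show ((1:ℝ)/2 + 1/2) = 1 by norm_num, mpow_one hCpd.1]
  have hM : msharp A⁻¹ B (1/2) = P * S * P := rfl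
  have key : ∀ X : Matrix m m ℂ, P * (Q * X) = X := fun X => by rw [← mul_assoc, hPQ, one_mul]
  have key' : ∀ X : Matrix m m ℂ, Q * (P * X) = X := fun X => by rw [← mul_assoc, hQP, one_mul]
  constructor
  · rw [hM]
    have := posDef_conj hSpd hPpd.isUnit
    rwa [hPpd.1] at this
  · rw [hM, ← hQQ]
    simp only [mul_assoc]
    rw [key' (S * P), key (S * P), ← mul_assoc S S, hSS, hC]
    simp only [mul_assoc]
    rw [hQP, mul_one, key B]

lemma msharp_unique {A B X : Matrix m m ℂ} (hA : A.PosDef) (hX : X.PosDef)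
    (hXB : X * A * X = B) : msharp A⁻¹ B (1/2) = X := by
  have hR : mpow A⁻¹ (-(1/2)) = mpow A (1/2) := by rw [mpow_inv hA, neg_neg]
  have hR' : mpow A⁻¹ (1/2) = mpow A (-(1/2)) := mpow_inv hA _
  set R := mpow A (1/2) with hRdef
  set R' := mpow A (-(1/2)) with hR'def
  have hRpd : R.PosDef := mpow_posDef hA _
  have hR'pd : R'.PosDef := mpow_posDef hA _
  have hRR' : R * R' = 1 := by
    rw [hRdef, hR'def, mpow_mul_mpow hA, show ((1:ℝ)/2 + -(1/2)) = 0 by norm_num, mpow_zero hA.1]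
  have hR'R : R' * R = 1 := by
    rw [hRdef, hR'def, mpow_mul_mpow hA, show (-((1:ℝ)/2) + 1/2) = 0 by norm_num, mpow_zero hA.1]
  have hRR : R * R = A := by
    rw [hRdef, mpow_mul_mpow hA, show ((1:ℝ)/2 + 1/2) = 1 by norm_num, mpow_one hA.1]
  have hW : (R * X * R).PosDef := by
    have := posDef_conj hX hRpd.isUnit
    rwa [hRpd.1] at this
  have hWW : (R * X * R) * (R * X * R) = R * B * R := by
    rw [← hXB]
    simp only [mul_assoc]
    rw [← mul_assoc R R (X * R), hRR]
  rw [msharp, hR, hR', ← hWW, mpow_sq_half hW]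
  simp only [mul_assoc]
  rw [hRR', mul_one, ← mul_assoc, hR'R, one_mul]

theorem mnat_symm' {A B : Matrix m m ℂ}
    (hA : A.PosDef) (hB : B.PosDef) (t : ℝ) :
    mnat A B t = mnat B A (1 - t) := by
  obtain ⟨hM, hMAM⟩ := msharp_spec hA hB
  set M := msharp A⁻¹ B (1/2) with hMdef
  have hMdet : IsUnit M.det := (Matrix.isUnit_iff_isUnit_det M).mp hM.isUnit
  have hMinv : M⁻¹ * B * M⁻¹ = A := by
    rw [← hMAM]
    simp only [mul_assoc]
    rw [Matrix.mul_nonsing_inv M hMdet, mul_one, ← mul_assoc,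
      Matrix.nonsing_inv_mul M hMdet, one_mul]
  have hN : msharp B⁻¹ A (1/2) = M⁻¹ := msharp_unique hB hM.inv hMinv
  unfold mnat
  rw [← hMdef, hN, mpow_inv hM]
  have h1 : mpow M (-(1-t)) * M = mpow M t := by
    calc mpow M (-(1-t)) * M = mpow M (-(1-t)) * mpow M 1 := by rw [mpow_one hM.1]
      _ = mpow M t := by rw [mpow_mul_mpow hM, show (-(1-t)+1 : ℝ) = t by ring]
  have h2 : M * mpow M (-(1-t)) = mpow M t := by
    calc M * mpow M (-(1-t)) = mpow M 1 * mpow M (-(1-t)) := by rw [mpow_one hM.1]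
      _ = mpow M t := by rw [mpow_mul_mpow hM, show (1 + -(1-t) : ℝ) = t by ring]
  rw [← hMAM]
  have h3 : mpow M (-(1-t)) * (M * A * M) * mpow M (-(1-t))
      = (mpow M (-(1-t)) * M) * A * (M * mpow M (-(1-t))) := by simp only [mul_assoc]
  rw [h3, h1, h2]


theorem mnat_symm {n : ℕ} (A B : Matrix (Fin n) (Fin n) ℂ)
    (hA : A.PosDef) (hB : B.PosDef) (t : ℝ) (ht : t ∈ Set.Icc (0:ℝ) 1) :
    mnat A B t = mnat B A (1 - t) :=
  mnat_symm' hA hB t
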